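/- Let L ≥ 2, n ≥ 2, 0 ≤ g ≤ L−1, 0 ≤ t ≤ n−2, and 0 < h_0 < L^t. Writing h_0 = Σ a_i' L^{b_i'} in base L with all b_i' < t, define ex_{h_0}(K_L^{n−2}) via the standard formula and ξ_{h_0}(K_L^{n−2}) = (L−1)(n−2)h_0 − ex_{h_0}(K_L^{n−2}) ≥ 0. Then ξ_{gL^t + h_0}(K_L^n) − ξ_{gL^t}(K_L^n) = (L−1)n h_0 − 2g h_0 − ex_{h_0}(K_L^n) ≥ ξ_{h_0}(K_L^{n−2}) ≥ 0. -/
import Mathlib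

set_option linter.unusedSectionVars false

/-- The base-`L` digit of `m` at position `j`, as an integer. -/
def dig (L m j : ℕ) : ℤ := ((Nat.digits L m).getD j 0 : ℤ)

lemma dig_eq (L : ℕ) (hL : 2 ≤ L) : ∀ (j m : ℕ), dig L m j = ((m / L ^ j % L : ℕ) : ℤ) := by
  intro j
  induction j with
  | zero =>
    intro m
    rcases Nat.eq_zero_or_pos m with h | h
    · simp [dig, h]
    · rw [dig, Nat.digits_def' (by omega) h]
      simp
  | succ j ih =>
    intro m
    rcases Nat.eq_zero_or_pos m with h | h
    · simp [dig, h]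
    · rw [dig, Nat.digits_def' (by omega : 1 < L) h]
      have : (Nat.digits L (m / L)).getD j 0 = ((m / L) / L ^ j % L) := by
        have := ih (m / L)
        rw [dig] at this
        exact_mod_cast this
      simp only [List.getD_cons_succ, this]
      rw [Nat.div_div_eq_div_mul, ← pow_succ']

lemma digits_len_le (L : ℕ) (hL : 2 ≤ L) : ∀ (N m : ℕ), m < L ^ N →
    (Nat.digits L m).length ≤ N := by
  intro N
  induction N with
  | zero => intro m hm; simp at hm; simp [hm]
  | succ N ih =>
    intro m hm
    rcases Nat.eq_zero_or_pos m with h | h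
    · simp [h]
    · rw [Nat.digits_def' (by omega : 1 < L) h]
      simp only [List.length_cons, Nat.add_le_add_iff_right]
      exact ih _ (by
        rw [Nat.div_lt_iff_lt_mul (by omega)]
        calc m < L ^ (N+1) := hm
        _ = L ^ N * L := by rw [pow_succ])

lemma sum_digits (L : ℕ) (hL : 2 ≤ L) : ∀ (b r : ℕ), r < L ^ b →
    ∑ j ∈ Finset.range b, (r / L ^ j % L) * L ^ j = r := by
  intro b
  induction b with
  | zero => intro r hr; simp at hr; simp [hr]
  | succ b ih =>
    intro r hr
    rw [Finset.sum_range_succ']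
    have h1 : ∀ i, r / L ^ (i+1) % L * L ^ (i+1) = ((r / L) / L ^ i % L * L ^ i) * L := by
      intro i
      rw [pow_succ', Nat.mul_comm L (L ^ i), ← Nat.div_div_eq_div_mul,
        Nat.div_div_eq_div_mul, Nat.div_div_eq_div_mul, Nat.mul_comm (L ^ i) L]
      ring
    simp only [h1, pow_zero, Nat.div_one, mul_one]
    rw [← Finset.sum_mul, ih (r / L) (by
      rw [Nat.div_lt_iff_lt_mul (by omega)]
      calc r < L ^ (b+1) := hr
      _ = L ^ b * L := by rw [pow_succ])]
    rw [Nat.mul_comm]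
    exact Nat.div_add_mod r L



/-- `ex_m(K_L^n)`: twice the maximum number of edges of an induced subgraph on `m`
vertices of the Hamming graph `K_L^n`, given by the explicit base-`L` formula
(it does not depend on `n`). -/
def exm (L m : ℕ) : ℤ :=
  (∑ j ∈ Finset.range (Nat.digits L m).length,
    (((L : ℤ) - 1) * dig L m j * j * (L : ℤ) ^ j + (dig L m j - 1) * dig L m j * (L : ℤ) ^ j))
  + 2 * ∑ j ∈ Finset.range (Nat.digits L m).length, ∑ j' ∈ Finset.range j,
      dig L m j * dig L m j' * (L : ℤ) ^ j'

def exmN (L N m : ℕ) : ℤ :=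
  (∑ j ∈ Finset.range N,
    (((L : ℤ) - 1) * dig L m j * j * (L : ℤ) ^ j + (dig L m j - 1) * dig L m j * (L : ℤ) ^ j))
  + 2 * ∑ j ∈ Finset.range N, ∑ j' ∈ Finset.range j,
      dig L m j * dig L m j' * (L : ℤ) ^ j'

lemma dig_out (L m j : ℕ) (h : (Nat.digits L m).length ≤ j) : dig L m j = 0 := by
  rw [dig, List.getD_eq_default _ _ h]; rfl

lemma exm_eq_exmN (L N m : ℕ) (h : (Nat.digits L m).length ≤ N) :
    exm L m = exmN L N m := by
  rw [exm, exmN]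
  congr 1
  · apply Finset.sum_subset (Finset.range_subset_range.2 h)
    intro j _ hj
    rw [Finset.mem_range, not_lt] at hj
    rw [dig_out L m j hj]
    ring
  · congr 1
    apply Finset.sum_subset (Finset.range_subset_range.2 h)
    intro j _ hj
    rw [Finset.mem_range, not_lt] at hj
    rw [Finset.sum_eq_zero]
    intro j' _
    rw [dig_out L m j hj]
    ring

section split
variable (L a b r : ℕ) (hL : 2 ≤ L) (ha : a < L) (hr : r < L ^ b)

include hL ha hr in
lemma dig_add_lt (j : ℕ) (hj : j < b) : dig L (a * L ^ b + r) j = dig L r j := by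
  rw [dig_eq L hL, dig_eq L hL]
  congr 1
  have hb : a * L ^ b = L ^ j * (a * L ^ (b - j)) := by
    rw [← Nat.mul_assoc, Nat.mul_comm (L ^ j), Nat.mul_assoc, ← pow_add]
    congr 2
    omega
  rw [hb, Nat.mul_add_div (by positivity), Nat.add_mod]
  have : a * L ^ (b - j) % L = 0 := by
    obtain ⟨k, hk⟩ : ∃ k, b - j = k + 1 := ⟨b - j - 1, by omega⟩
    rw [hk, pow_succ, ← Nat.mul_assoc, Nat.mul_mod_left]
  rw [this, Nat.zero_add, Nat.mod_mod_of_dvd _ dvd_rfl]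

include hL ha hr in
lemma dig_add_eq : dig L (a * L ^ b + r) b = a := by
  rw [dig_eq L hL]
  rw [Nat.mul_comm, Nat.mul_add_div (by positivity), Nat.div_eq_of_lt hr, Nat.add_zero,
    Nat.mod_eq_of_lt ha]

include hL hr in
lemma dig_r_out (j : ℕ) (hj : b ≤ j) : dig L r j = 0 := by
  rw [dig_eq L hL, Nat.div_eq_of_lt (lt_of_lt_of_le hr (Nat.pow_le_pow_right (by omega) hj))]
  simp
end split

lemma sum_dig_eq (L b r : ℕ) (hL : 2 ≤ L) (hr : r < L ^ b) :
    ∑ j' ∈ Finset.range b, dig L r j' * (L : ℤ) ^ j' = (r : ℤ) := by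
  have key : (∑ j' ∈ Finset.range b, dig L r j' * (L : ℤ) ^ j')
      = ((∑ j' ∈ Finset.range b, r / L ^ j' % L * L ^ j' : ℕ) : ℤ) := by
    push_cast
    apply Finset.sum_congr rfl
    intro j _
    rw [dig_eq L hL]
    push_cast
    ring
  rw [key, sum_digits L hL b r hr]

lemma exm_split (L a b r : ℕ) (hL : 2 ≤ L) (ha : a < L) (hr : r < L ^ b) :
    exm L (a * L ^ b + r) = exm L (a * L ^ b) + exm L r + 2 * a * r := by
  have hLb : 0 < L ^ b := by positivity
  have hm : a * L ^ b + r < L ^ (b + 1) := by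
    calc a * L ^ b + r < a * L ^ b + L ^ b := by omega
    _ = (a + 1) * L ^ b := by ring
    _ ≤ L * L ^ b := Nat.mul_le_mul_right _ (by omega)
    _ = L ^ (b + 1) := by rw [pow_succ]; ring
  have hm2 : a * L ^ b < L ^ (b + 1) := by omega
  have hr2 : r < L ^ (b + 1) := by
    calc r < L ^ b := hr
    _ ≤ L ^ (b+1) := Nat.pow_le_pow_right (by omega) (by omega)
  rw [exm_eq_exmN L (b+1) _ (digits_len_le L hL _ _ hm),
    exm_eq_exmN L (b+1) _ (digits_len_le L hL _ _ hm2),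
    exm_eq_exmN L (b+1) _ (digits_len_le L hL _ _ hr2), exmN, exmN, exmN]
  -- digit facts
  have d1 : ∀ j < b, dig L (a * L ^ b + r) j = dig L r j := fun j hj => dig_add_lt L a b r hL ha hr j hj
  have d2 : dig L (a * L ^ b + r) b = a := dig_add_eq L a b r hL ha hr
  have d3 : ∀ j < b, dig L (a * L ^ b) j = 0 := by
    intro j hj
    have := dig_add_lt L a b 0 hL ha hLb j hj
    rw [Nat.add_zero] at this
    rw [this]
    simp [dig]
  have d4 : dig L (a * L ^ b) b = a := by
    have := dig_add_eq L a b 0 hL ha hLb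
    rwa [Nat.add_zero] at this
  have d5 : dig L r b = 0 := dig_r_out L b r hL hr b le_rfl
  rw [Finset.sum_range_succ, Finset.sum_range_succ, Finset.sum_range_succ,
    Finset.sum_range_succ, Finset.sum_range_succ, Finset.sum_range_succ]
  have e1 : ∀ m' : ℕ, (∀ j < b, dig L m' j = dig L r j) →
      (∑ j ∈ Finset.range b,
        (((L : ℤ) - 1) * dig L m' j * j * (L : ℤ) ^ j + (dig L m' j - 1) * dig L m' j * (L : ℤ) ^ j))
      = ∑ j ∈ Finset.range b,
        (((L : ℤ) - 1) * dig L r j * j * (L : ℤ) ^ j + (dig L r j - 1) * dig L r j * (L : ℤ) ^ j) := by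
    intro m' h
    apply Finset.sum_congr rfl
    intro j hj
    rw [h j (Finset.mem_range.mp hj)]
  have e2 : ∀ m' : ℕ, (∀ j < b, dig L m' j = dig L r j) →
      (∑ j ∈ Finset.range b, ∑ j' ∈ Finset.range j, dig L m' j * dig L m' j' * (L : ℤ) ^ j')
      = ∑ j ∈ Finset.range b, ∑ j' ∈ Finset.range j, dig L r j * dig L r j' * (L : ℤ) ^ j' := by
    intro m' h
    apply Finset.sum_congr rfl
    intro j hj
    apply Finset.sum_congr rfl
    intro j' hj'
    rw [h j (Finset.mem_range.mp hj), h j' (lt_trans (Finset.mem_range.mp hj') (Finset.mem_range.mp hj))]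
  rw [e1 _ d1, e2 _ d1, d2]
  have z1 : (∑ j ∈ Finset.range b,
      (((L : ℤ) - 1) * dig L (a * L ^ b) j * j * (L : ℤ) ^ j
        + (dig L (a * L ^ b) j - 1) * dig L (a * L ^ b) j * (L : ℤ) ^ j)) = 0 := by
    apply Finset.sum_eq_zero
    intro j hj
    rw [d3 j (Finset.mem_range.mp hj)]
    ring
  have z2 : (∑ j ∈ Finset.range b, ∑ j' ∈ Finset.range j,
      dig L (a * L ^ b) j * dig L (a * L ^ b) j' * (L : ℤ) ^ j') = 0 := by
    apply Finset.sum_eq_zero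
    intro j hj
    apply Finset.sum_eq_zero
    intro j' hj'
    rw [d3 j (Finset.mem_range.mp hj)]
    ring
  have z3 : (∑ j' ∈ Finset.range b, dig L (a * L ^ b) b * dig L (a * L ^ b) j' * (L : ℤ) ^ j') = 0 := by
    apply Finset.sum_eq_zero
    intro j' hj'
    rw [d3 j' (Finset.mem_range.mp hj')]
    ring
  have z4 : (∑ j' ∈ Finset.range b, dig L r b * dig L r j' * (L : ℤ) ^ j') = 0 := by
    apply Finset.sum_eq_zero
    intro j' hj'
    rw [d5]
    ring
  have cross : (∑ j' ∈ Finset.range b,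
      (a : ℤ) * dig L (a * L ^ b + r) j' * (L : ℤ) ^ j') = (a : ℤ) * r := by
    rw [← sum_dig_eq L b r hL hr, Finset.mul_sum]
    apply Finset.sum_congr rfl
    intro j' hj'
    rw [d1 j' (Finset.mem_range.mp hj')]
    ring
  rw [z1, z2, z3, z4, d4, d5, cross]
  ring

lemma exm_mul_pow (L a b : ℕ) (hL : 2 ≤ L) (ha : a < L) :
    exm L (a * L ^ b) = ((L : ℤ) - 1) * a * b * (L : ℤ) ^ b + ((a : ℤ) - 1) * a * (L : ℤ) ^ b := by
  have hLb : 0 < L ^ b := by positivity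
  have hm2 : a * L ^ b < L ^ (b + 1) := by
    calc a * L ^ b < L * L ^ b := by
          exact (Nat.mul_lt_mul_right hLb).mpr ha
    _ = L ^ (b + 1) := by rw [pow_succ]; ring
  rw [exm_eq_exmN L (b+1) _ (digits_len_le L hL _ _ hm2), exmN]
  have d3 : ∀ j < b, dig L (a * L ^ b) j = 0 := by
    intro j hj
    have := dig_add_lt L a b 0 hL ha hLb j hj
    rw [Nat.add_zero] at this
    rw [this]
    simp [dig]
  have d4 : dig L (a * L ^ b) b = a := by
    have := dig_add_eq L a b 0 hL ha hLb
    rwa [Nat.add_zero] at this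
  rw [Finset.sum_range_succ, Finset.sum_range_succ]
  have z1 : (∑ j ∈ Finset.range b,
      (((L : ℤ) - 1) * dig L (a * L ^ b) j * j * (L : ℤ) ^ j
        + (dig L (a * L ^ b) j - 1) * dig L (a * L ^ b) j * (L : ℤ) ^ j)) = 0 := by
    apply Finset.sum_eq_zero
    intro j hj
    rw [d3 j (Finset.mem_range.mp hj)]
    ring
  have z2 : (∑ j ∈ Finset.range b, ∑ j' ∈ Finset.range j,
      dig L (a * L ^ b) j * dig L (a * L ^ b) j' * (L : ℤ) ^ j') = 0 := by
    apply Finset.sum_eq_zero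
    intro j hj
    apply Finset.sum_eq_zero
    intro j' hj'
    rw [d3 j (Finset.mem_range.mp hj)]
    ring
  have z3 : (∑ j' ∈ Finset.range b, dig L (a * L ^ b) b * dig L (a * L ^ b) j' * (L : ℤ) ^ j') = 0 := by
    apply Finset.sum_eq_zero
    intro j' hj'
    rw [d3 j' (Finset.mem_range.mp hj')]
    ring
  rw [z1, z2, z3, d4]
  ring

lemma exm_zero (L : ℕ) : exm L 0 = 0 := by simp [exm]

/-- `ξ_m(K_L^n) = (L-1) n m - ex_m(K_L^n)`. -/
def xi (L n m : ℕ) : ℤ := ((L : ℤ) - 1) * n * m - exm L m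

lemma xi_nonneg (L : ℕ) (hL : 2 ≤ L) : ∀ m N, m < L ^ N → 0 ≤ xi L N m := by
  intro m
  induction m using Nat.strong_induction_on with
  | _ m ih =>
  intro N hmN
  rcases Nat.eq_zero_or_pos m with h0 | h0
  · subst h0
    simp [xi, exm_zero]
  have hlen1 : 1 ≤ (Nat.digits L m).length := by
    have hne : Nat.digits L m ≠ [] := Nat.digits_ne_nil_iff_ne_zero.mpr (by omega)
    exact List.length_pos_iff.mpr hne
  set len := (Nat.digits L m).length with hlendef
  set b := len - 1 with hbdef
  have hlenN : len ≤ N := digits_len_le L hL N m hmN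
  have hbN : b < N := by omega
  have hmlen : m < L ^ len := Nat.lt_base_pow_length_digits (by omega)
  have hLb : 0 < L ^ b := by positivity
  set a := m / L ^ b with hadef
  set r := m % L ^ b with hrdef
  have hmeq : m = a * L ^ b + r := by
    rw [hadef, hrdef, Nat.mul_comm]
    exact (Nat.div_add_mod m (L ^ b)).symm
  have hr : r < L ^ b := Nat.mod_lt _ hLb
  have ha : a < L := by
    rw [hadef, Nat.div_lt_iff_lt_mul hLb]
    calc m < L ^ len := hmlen
    _ = L * L ^ b := by rw [← pow_succ']; congr 1; omega
  have hbm : L ^ b ≤ m := by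
    by_contra h
    push_neg at h
    have := digits_len_le L hL b m h
    omega
  have ha1 : 1 ≤ a := by
    rw [hadef]
    exact Nat.one_le_div_iff hLb |>.mpr hbm
  have hrm : r < m := lt_of_lt_of_le hr hbm
  have ihr : 0 ≤ xi L b r := ih r hrm b hr
  have hsplit := exm_split L a b r hL ha hr
  have hapow := exm_mul_pow L a b hL ha
  rw [xi] at ihr ⊢
  rw [hmeq, hsplit, hapow]
  push_cast at ihr ⊢
  set A := (a : ℤ) with hAdef
  set R := (r : ℤ) with hRdef
  set P := ((L : ℤ)) ^ b with hPdef
  have hP1 : (1 : ℤ) ≤ P := one_le_pow₀ (by exact_mod_cast by omega : (1:ℤ) ≤ L)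
  have hR0 : (0 : ℤ) ≤ R := by positivity
  have hRP : R ≤ P - 1 := by
    have : (r : ℤ) < ((L ^ b : ℕ) : ℤ) := by exact_mod_cast hr
    push_cast at this
    omega
  have hA1 : (1:ℤ) ≤ A := by rw [hAdef]; exact_mod_cast ha1
  have hAL : A ≤ (L:ℤ) - 1 := by
    have : A < (L:ℤ) := by rw [hAdef]; exact_mod_cast ha
    omega
  have hNb : (b:ℤ) + 1 ≤ (N:ℤ) := by exact_mod_cast hbN
  have hD1 : (1:ℤ) ≤ (N:ℤ) - (b:ℤ) := by omega
  have key : 0 ≤ A * P * (((L:ℤ)-1) * ((N:ℤ) - (b:ℤ)) - A + 1) + R * (((L:ℤ)-1) * ((N:ℤ) - (b:ℤ)) - 2 * A) := by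
    rcases le_or_gt (2 * A) (((L:ℤ)-1) * ((N:ℤ) - (b:ℤ))) with hc | hc
    · have t1 : 0 ≤ A * P * (((L:ℤ)-1) * ((N:ℤ) - (b:ℤ)) - A + 1) :=
        mul_nonneg (mul_nonneg (by linarith) (by linarith)) (by linarith)
      have t2 : 0 ≤ R * (((L:ℤ)-1) * ((N:ℤ) - (b:ℤ)) - 2 * A) := mul_nonneg hR0 (by linarith)
      linarith
    · have hc' : ((L:ℤ)-1) * ((N:ℤ) - (b:ℤ)) - 2 * A ≤ 0 := by linarith
      have t3 : (P - 1) * (((L:ℤ)-1) * ((N:ℤ) - (b:ℤ)) - 2 * A) ≤ R * (((L:ℤ)-1) * ((N:ℤ) - (b:ℤ)) - 2 * A) :=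
        mul_le_mul_of_nonpos_right hRP hc'
      have hLA : 0 ≤ (L:ℤ) - 1 := by linarith
      have h5 : ((L:ℤ)-1) * 1 ≤ ((L:ℤ)-1) * ((N:ℤ) - (b:ℤ)) := mul_le_mul_of_nonneg_left hD1 hLA
      have t4 : 0 ≤ P * (A + 1) * (((L:ℤ)-1) * ((N:ℤ) - (b:ℤ)) - A) :=
        mul_nonneg (mul_nonneg (by linarith) (by linarith)) (by linarith)
      nlinarith [t3, t4, hc']
  linarith [key, ihr]

theorem stmt4 (L n g t h0 : ℕ) (hL : 2 ≤ L) (hn : 2 ≤ n)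
    (hg : g ≤ L - 1) (ht : t ≤ n - 2) (h0pos : 0 < h0) (h0lt : h0 < L ^ t) :
    xi L n (g * L ^ t + h0) - xi L n (g * L ^ t)
        = ((L : ℤ) - 1) * (n : ℤ) * (h0 : ℤ) - 2 * (g : ℤ) * (h0 : ℤ) - exm L h0 ∧
      xi L (n - 2) h0
        ≤ ((L : ℤ) - 1) * (n : ℤ) * (h0 : ℤ) - 2 * (g : ℤ) * (h0 : ℤ) - exm L h0 ∧
      0 ≤ xi L (n - 2) h0 := by
  have hgL : g < L := by omega
  have hsplit := exm_split L g t h0 hL hgL h0lt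
  have h0L2 : h0 < L ^ (n - 2) := lt_of_lt_of_le h0lt (Nat.pow_le_pow_right (by omega) ht)
  have hnn := xi_nonneg L hL h0 (n - 2) h0L2
  have hcast : ((n - 2 : ℕ) : ℤ) = (n : ℤ) - 2 := by omega
  have hgZ : (g : ℤ) ≤ (L : ℤ) - 1 := by omega
  have h0nn : (0 : ℤ) ≤ (h0 : ℤ) := by positivity
  refine ⟨?_, ?_, hnn⟩
  · rw [xi, xi, hsplit]
    push_cast
    ring
  · rw [xi, hcast]
    nlinarith [mul_le_mul_of_nonneg_right hgZ h0nn]
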